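/- For α = 2, the mean square displacement of the slicer map grows logarithmically: ⟨ΔX²_n⟩ ∼ log n as n → ∞; in particular lim_{n→∞} ⟨ΔX²_n⟩/n^γ = +∞ for γ = 0 and = 0 for every γ ∈ (0,2]. -/

import Mathlib

open Filter

noncomputable def ella (α : ℝ) (m : ℤ) : ℝ :=
  (((|m| : ℤ) : ℝ) + (2:ℝ) ^ (1/α)) ^ (-α)

/-- The coarse-grained distribution of the slicer map `S_α` at time `n`:
`A_{±n} = ℓ_{n-1}`, `A_j = ℓ_{|j|-1} - ℓ_{|j|+1}` for `0 < |j| < n` with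
`j ≡ n (mod 2)`, `A_0 = 2(ℓ_0 - ℓ_1)` for even `n`, and `A_j = 0` otherwise. -/
noncomputable def Acg (α : ℝ) (n : ℕ) (j : ℤ) : ℝ :=
  if |j| = (n:ℤ) then ella α ((n:ℤ) - 1)
  else if j = 0 ∧ Even n then 2 * (ella α 0 - ella α 1)
  else if 0 < |j| ∧ |j| < (n:ℤ) ∧ j % 2 = (n:ℤ) % 2 then
    ella α (|j| - 1) - ella α (|j| + 1)
  else 0

/-- The mean square displacement (`p = 2`) and more generally the `p`-th moment of
the coarse-grained distribution. -/
noncomputable def momentCG (α : ℝ) (p : ℕ) (n : ℕ) : ℝ :=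
  ∑ j ∈ Finset.Icc (-(n:ℤ)) (n:ℤ), Acg α n j * (j:ℝ) ^ p

lemma acg_zero (α : ℝ) (n : ℕ) (j : ℤ) (h : (n:ℤ) < |j|) : Acg α n j = 0 := by
  rw [Int.abs_eq_natAbs] at h
  simp only [Acg, Int.abs_eq_natAbs, Nat.even_iff]
  rw [if_neg (by omega), if_neg (by omega), if_neg (by omega)]

lemma acg_succ_self (n : ℕ) (j : ℤ) (hj : |j| = (n:ℤ)) (hn : 0 < n) :
    Acg 2 (n+2) j = ella 2 ((n:ℤ)-1) - ella 2 ((n:ℤ)+1) := by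
  rw [Int.abs_eq_natAbs] at hj
  have h2 : ((n+2:ℕ):ℤ) = (n:ℤ)+2 := by push_cast; ring
  simp only [Acg, Int.abs_eq_natAbs, Nat.even_iff, h2]
  rw [if_neg (by omega), if_neg (by omega), if_pos (by omega), hj]

lemma acg_stable (n : ℕ) (j : ℤ) (hj : |j| < (n:ℤ)) : Acg 2 (n+2) j = Acg 2 n j := by
  rw [Int.abs_eq_natAbs] at hj
  have h2 : ((n+2:ℕ):ℤ) = (n:ℤ)+2 := by push_cast; ring
  simp only [Acg, Int.abs_eq_natAbs, Nat.even_iff, h2]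
  split_ifs <;> first | rfl | (exfalso; omega)

lemma acg_offpar (n : ℕ) (j : ℤ) (hj : |j| = (n:ℤ)+1) : Acg 2 (n+2) j = 0 := by
  rw [Int.abs_eq_natAbs] at hj
  have h2 : ((n+2:ℕ):ℤ) = (n:ℤ)+2 := by push_cast; ring
  simp only [Acg, Int.abs_eq_natAbs, Nat.even_iff, h2]
  rw [if_neg (by omega), if_neg (by omega), if_neg (by omega)]

lemma moment_rec (n : ℕ) :
    momentCG 2 2 (n+2) = momentCG 2 2 n + 8*((n:ℝ)+1) * ella 2 ((n:ℤ)+1) := by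
  have hsub : Finset.Icc (-(n:ℤ)) (n:ℤ) ⊆ Finset.Icc (-((n:ℤ)+2)) ((n:ℤ)+2) :=
    Finset.Icc_subset_Icc (by omega) (by omega)
  have hM : momentCG 2 2 n = ∑ j ∈ Finset.Icc (-((n:ℤ)+2)) ((n:ℤ)+2),
      Acg 2 n j * (j:ℝ)^2 := by
    simp only [momentCG]
    refine Finset.sum_subset hsub ?_
    intro j hj hj'
    simp only [Finset.mem_Icc] at hj hj'
    rw [acg_zero]
    · ring
    · rw [Int.abs_eq_natAbs]; omega
  have hM2 : momentCG 2 2 (n+2) = ∑ j ∈ Finset.Icc (-((n:ℤ)+2)) ((n:ℤ)+2),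
      Acg 2 (n+2) j * (j:ℝ)^2 := by
    simp only [momentCG]
    congr 1 <;> push_cast <;> ring
  set L := ella 2 ((n:ℤ)+1) with hL
  have key : ∀ j ∈ Finset.Icc (-((n:ℤ)+2)) ((n:ℤ)+2),
      Acg 2 (n+2) j * (j:ℝ)^2 - Acg 2 n j * (j:ℝ)^2 =
      ((if j = (n:ℤ)+2 then ((n:ℝ)+2)^2 * L else 0) +
       (if j = -((n:ℤ)+2) then ((n:ℝ)+2)^2 * L else 0)) +
      ((if j = (n:ℤ) then -((n:ℝ)^2 * L) else 0) +
       (if j = -(n:ℤ) then -((n:ℝ)^2 * L) else 0)) := by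
    intro j hj
    simp only [Finset.mem_Icc] at hj
    obtain ⟨hjl, hjr⟩ := hj
    have h2 : ((n+2:ℕ):ℤ) = (n:ℤ)+2 := by push_cast; ring
    by_cases h1 : j = (n:ℤ)+2 ∨ j = -((n:ℤ)+2)
    · have hja : |j| = (n:ℤ)+2 := by rw [Int.abs_eq_natAbs]; omega
      have hA2 : Acg 2 (n+2) j = L := by
        simp only [Acg, h2]
        rw [if_pos hja, hL]
        congr 1
        omega
      have hA0 : Acg 2 n j = 0 := acg_zero 2 n j (by omega)
      have hjr2 : (j:ℝ)^2 = ((n:ℝ)+2)^2 := by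
        rcases h1 with rfl | rfl <;> push_cast <;> ring
      rw [hA2, hA0, hjr2]
      rcases h1 with rfl | rfl
      · rw [if_pos rfl, if_neg (by omega), if_neg (by omega), if_neg (by omega)]; ring
      · rw [if_neg (by omega), if_pos rfl, if_neg (by omega), if_neg (by omega)]; ring
    · push_neg at h1
      rw [if_neg h1.1, if_neg h1.2]
      by_cases h3 : (j = (n:ℤ) ∨ j = -(n:ℤ)) ∧ 0 < n
      · obtain ⟨h3, hn⟩ := h3
        have hja : |j| = (n:ℤ) := by rw [Int.abs_eq_natAbs]; omega
        have hA2 : Acg 2 (n+2) j = ella 2 ((n:ℤ)-1) - L := acg_succ_self n j hja hn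
        have hA0 : Acg 2 n j = ella 2 ((n:ℤ)-1) := by
          simp only [Acg]; rw [if_pos hja]
        have hjr2 : (j:ℝ)^2 = ((n:ℝ))^2 := by
          rcases h3 with rfl | rfl <;> push_cast <;> ring
        rw [hA2, hA0, hjr2]
        rcases h3 with rfl | rfl
        · rw [if_pos rfl, if_neg (by omega)]; ring
        · rw [if_neg (by omega), if_pos rfl]; ring
      · -- remaining: difference is 0 and RHS is 0
        have hg : Acg 2 (n+2) j * (j:ℝ)^2 - Acg 2 n j * (j:ℝ)^2 = 0 := by
          by_cases hz : j = 0
          · subst hz; push_cast; ring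
          · have hnn : ¬ ((j = (n:ℤ) ∨ j = -(n:ℤ)) ∧ 0 < n) := h3
            have hjn : j ≠ (n:ℤ) ∧ j ≠ -(n:ℤ) := by
              constructor <;> intro hh <;> apply hnn <;>
                refine ⟨by tauto, by omega⟩
            rcases lt_trichotomy (|j|) ((n:ℤ)+1) with hlt | heq | hgt
            · rw [acg_stable n j (by rw [Int.abs_eq_natAbs] at hlt ⊢; omega)]; ring
            · rw [acg_offpar n j heq, acg_zero 2 n j (by omega)]; ring
            · exfalso
              rw [Int.abs_eq_natAbs] at hgt
              omega
        rw [hg]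
        have hn0 : ∀ _ : j = (n:ℤ) ∨ j = -(n:ℤ), n = 0 := fun h => by
          by_contra hc
          exact h3 ⟨h, by omega⟩
        split_ifs with ha hb hb
        · have := hn0 (Or.inl ha); subst this; norm_num
        · have := hn0 (Or.inl ha); subst this; norm_num
        · have := hn0 (Or.inr hb); subst this; norm_num
        · ring
  rw [hM, hM2, ← sub_eq_iff_eq_add']
  rw [← Finset.sum_sub_distrib, Finset.sum_congr rfl key]
  rw [Finset.sum_add_distrib, Finset.sum_add_distrib, Finset.sum_add_distrib]
  rw [Finset.sum_ite_eq' _ ((n:ℤ)+2), Finset.sum_ite_eq' _ (-((n:ℤ)+2)),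
    Finset.sum_ite_eq' _ ((n:ℤ)), Finset.sum_ite_eq' _ (-(n:ℤ))]
  rw [if_pos (by simp [Finset.mem_Icc]; omega), if_pos (by simp [Finset.mem_Icc]; omega),
    if_pos (by simp [Finset.mem_Icc]; omega), if_pos (by simp [Finset.mem_Icc]; omega)]
  ring
lemma ella_eq (m : ℤ) : ella 2 m = 1 / ((((|m|:ℤ)):ℝ) + Real.sqrt 2)^2 := by
  have hx : (0:ℝ) ≤ (((|m|:ℤ)):ℝ) + Real.sqrt 2 := by
    have : (0:ℝ) ≤ (((|m|:ℤ)):ℝ) := by exact_mod_cast abs_nonneg m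
    have := Real.sqrt_nonneg 2
    linarith
  rw [ella, show (1:ℝ)/2 = (1/2 : ℝ) from rfl, ← Real.sqrt_eq_rpow,
    Real.rpow_neg hx, show ((2:ℝ)) = ((2:ℕ):ℝ) from by norm_num, Real.rpow_natCast,
    one_div]

lemma ella_eq' (m : ℕ) : ella 2 ((m:ℤ)+1) = 1 / (((m:ℝ)+1) + Real.sqrt 2)^2 := by
  rw [ella_eq]
  congr 3
  rw [abs_of_nonneg (by positivity)]
  push_cast
  ring

lemma key_upper (m : ℕ) (hm : 1 ≤ m) :
    8*((m:ℝ)+1) * ella 2 ((m:ℤ)+1) ≤ 4 * (Real.log ((m:ℝ)+2) - Real.log (m:ℝ)) := by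
  have hx : (1:ℝ) ≤ (m:ℝ) := by exact_mod_cast hm
  set x := (m:ℝ)
  have hs0 : (0:ℝ) ≤ Real.sqrt 2 := Real.sqrt_nonneg 2
  have hs2 : Real.sqrt 2 ^ 2 = 2 := Real.sq_sqrt (by norm_num)
  have hs1 : (1:ℝ) ≤ Real.sqrt 2 := by nlinarith
  rw [ella_eq']
  have h1 : 8*(x+1) * (1 / ((x+1) + Real.sqrt 2)^2) ≤ 8/(x+2) := by
    rw [mul_one_div, div_le_div_iff₀ (by positivity) (by positivity)]
    nlinarith [sq_nonneg (Real.sqrt 2 - 1)]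
  have h2 : 2/(x+2) ≤ Real.log (x+2) - Real.log x := by
    have hpos : (0:ℝ) < x / (x+2) := by positivity
    have hlog := Real.log_le_sub_one_of_pos hpos
    rw [Real.log_div (by positivity) (by positivity)] at hlog
    have : x/(x+2) - 1 = -(2/(x+2)) := by field_simp; ring
    linarith
  calc 8*(x+1) * (1 / ((x+1) + Real.sqrt 2)^2) ≤ 8/(x+2) := h1
    _ = 4 * (2/(x+2)) := by ring
    _ ≤ 4 * (Real.log (x+2) - Real.log x) := by linarith

lemma key_lower (m : ℕ) (hm : 1 ≤ m) :
    4 * (Real.log ((m:ℝ)+7) - Real.log ((m:ℝ)+5)) ≤ 8*((m:ℝ)+1) * ella 2 ((m:ℤ)+1) := by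
  have hx : (1:ℝ) ≤ (m:ℝ) := by exact_mod_cast hm
  set x := (m:ℝ)
  have hs0 : (0:ℝ) ≤ Real.sqrt 2 := Real.sqrt_nonneg 2
  have hs2 : Real.sqrt 2 ^ 2 = 2 := Real.sq_sqrt (by norm_num)
  have hs1 : Real.sqrt 2 ≤ 1.45 := by nlinarith [sq_nonneg (Real.sqrt 2 - 1.45)]
  rw [ella_eq']
  have h2 : Real.log (x+7) - Real.log (x+5) ≤ 2/(x+5) := by
    have hpos : (0:ℝ) < (x+7) / (x+5) := by positivity
    have hlog := Real.log_le_sub_one_of_pos hpos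
    rw [Real.log_div (by positivity) (by positivity)] at hlog
    have : (x+7)/(x+5) - 1 = 2/(x+5) := by field_simp; ring
    linarith
  have h1 : 8/(x+5) ≤ 8*(x+1) * (1 / ((x+1) + Real.sqrt 2)^2) := by
    rw [mul_one_div, div_le_div_iff₀ (by positivity) (by positivity)]
    nlinarith
  calc 4 * (Real.log (x+7) - Real.log (x+5)) ≤ 4 * (2/(x+5)) := by linarith
    _ = 8/(x+5) := by ring
    _ ≤ _ := h1

noncomputable def CC : ℝ := |momentCG 2 2 2| + |momentCG 2 2 3|

lemma moment_upper : ∀ n : ℕ, momentCG 2 2 (n+2) ≤ 4 * Real.log ((n:ℝ)+2) + CC := by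
  intro n
  induction n using Nat.twoStepInduction with
  | zero =>
    have h1 : momentCG 2 2 2 ≤ |momentCG 2 2 2| := le_abs_self _
    have h2 : (0:ℝ) ≤ |momentCG 2 2 3| := abs_nonneg _
    have h3 : (0:ℝ) ≤ Real.log (((0:ℕ):ℝ)+2) := Real.log_nonneg (by norm_num)
    simp only [CC]
    norm_num at h3 ⊢
    linarith
  | one =>
    have h1 : momentCG 2 2 3 ≤ |momentCG 2 2 3| := le_abs_self _
    have h2 : (0:ℝ) ≤ |momentCG 2 2 2| := abs_nonneg _
    have h3 : (0:ℝ) ≤ Real.log (((1:ℕ):ℝ)+2) := Real.log_nonneg (by norm_num)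
    simp only [CC]
    norm_num at h3 ⊢
    linarith
  | more n ih _ =>
    have hrec := moment_rec (n+2)
    have hkey := key_upper (n+2) (by omega)
    push_cast at hrec hkey ih ⊢
    ring_nf at hrec hkey ih ⊢
    linarith

lemma moment_lower : ∀ n : ℕ,
    4 * Real.log ((n:ℝ)+7) - (4 * Real.log 9 + CC) ≤ momentCG 2 2 (n+2) := by
  intro n
  induction n using Nat.twoStepInduction with
  | zero =>
    have h1 : -|momentCG 2 2 2| ≤ momentCG 2 2 2 := neg_abs_le _
    have h2 : (0:ℝ) ≤ |momentCG 2 2 3| := abs_nonneg _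
    have h3 : Real.log (((0:ℕ):ℝ)+7) ≤ Real.log 9 :=
      Real.log_le_log (by norm_num) (by norm_num)
    simp only [CC]
    norm_num at h3 ⊢
    linarith
  | one =>
    have h1 : -|momentCG 2 2 3| ≤ momentCG 2 2 3 := neg_abs_le _
    have h2 : (0:ℝ) ≤ |momentCG 2 2 2| := abs_nonneg _
    have h3 : Real.log (((1:ℕ):ℝ)+7) ≤ Real.log 9 :=
      Real.log_le_log (by norm_num) (by norm_num)
    simp only [CC]
    norm_num at h3 ⊢
    linarith
  | more n ih _ =>
    have hrec := moment_rec (n+2)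
    have hkey := key_lower (n+2) (by omega)
    push_cast at hrec hkey ih ⊢
    ring_nf at hrec hkey ih ⊢
    linarith


/-- for `α = 2` the mean square displacement of the slicer map grows
logarithmically: `⟨ΔX²_n⟩ ∼ log n`; in particular `⟨ΔX²_n⟩ → ∞` (the case `γ = 0`)
and `⟨ΔX²_n⟩ / n^γ → 0` for every `γ ∈ (0,2]`. -/
theorem msd_log :
    (∃ c : ℝ, 0 < c ∧
      Tendsto (fun n : ℕ => momentCG 2 2 n / Real.log n) atTop (nhds c)) ∧
    Tendsto (fun n : ℕ => momentCG 2 2 n) atTop atTop ∧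
    (∀ γ : ℝ, 0 < γ → γ ≤ 2 →
      Tendsto (fun n : ℕ => momentCG 2 2 n / (n:ℝ)^γ) atTop (nhds 0)) := by
  set C' : ℝ := 4 * Real.log 9 + CC with hC'
  have hub : ∀ n : ℕ, 2 ≤ n → momentCG 2 2 n ≤ 4 * Real.log (n:ℝ) + CC := by
    intro n hn
    obtain ⟨m, rfl⟩ : ∃ m, n = m + 2 := ⟨n - 2, by omega⟩
    have := moment_upper m
    push_cast at this ⊢
    linarith
  have hlb : ∀ n : ℕ, 2 ≤ n → 4 * Real.log (n:ℝ) - C' ≤ momentCG 2 2 n := by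
    intro n hn
    obtain ⟨m, rfl⟩ : ∃ m, n = m + 2 := ⟨n - 2, by omega⟩
    have h := moment_lower m
    have hmono : Real.log ((m:ℝ)+2) ≤ Real.log ((m:ℝ)+7) :=
      Real.log_le_log (by positivity) (by linarith)
    push_cast at h ⊢
    linarith
  have hlog : Tendsto (fun n : ℕ => Real.log n) atTop atTop :=
    Real.tendsto_log_atTop.comp tendsto_natCast_atTop_atTop
  have hmain : Tendsto (fun n : ℕ => momentCG 2 2 n / Real.log n) atTop (nhds 4) := by
    have hup : Tendsto (fun n : ℕ => 4 + CC / Real.log n) atTop (nhds 4) := by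
      have := (tendsto_const_nhds : Tendsto (fun _ : ℕ => CC) atTop (nhds CC)).div_atTop hlog
      simpa using tendsto_const_nhds.add this
    have hlo : Tendsto (fun n : ℕ => 4 - C' / Real.log n) atTop (nhds 4) := by
      have := (tendsto_const_nhds : Tendsto (fun _ : ℕ => C') atTop (nhds C')).div_atTop hlog
      simpa using tendsto_const_nhds.sub this
    refine tendsto_of_tendsto_of_tendsto_of_le_of_le' hlo hup ?_ ?_
    · filter_upwards [eventually_ge_atTop 3] with n hn
      have hLpos : 0 < Real.log (n:ℝ) :=
        Real.log_pos (by exact_mod_cast (by omega : 1 < n))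
      have hb := hlb n (by omega)
      have heq : 4 - C' / Real.log (n:ℝ) =
          (4 * Real.log (n:ℝ) - C') / Real.log (n:ℝ) := by
        field_simp
      rw [heq]
      gcongr
    · filter_upwards [eventually_ge_atTop 3] with n hn
      have hLpos : 0 < Real.log (n:ℝ) :=
        Real.log_pos (by exact_mod_cast (by omega : 1 < n))
      have hb := hub n (by omega)
      have heq : 4 + CC / Real.log (n:ℝ) =
          (4 * Real.log (n:ℝ) + CC) / Real.log (n:ℝ) := by
        field_simp
      rw [heq]
      gcongr
  refine ⟨⟨4, by norm_num, hmain⟩, ?_, ?_⟩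
  · -- tends to infinity
    have hminor : Tendsto (fun n : ℕ => 4 * Real.log (n:ℝ) - C') atTop atTop := by
      apply tendsto_atTop_add_const_right
      exact hlog.const_mul_atTop (by norm_num)
    refine tendsto_atTop_mono' atTop ?_ hminor
    filter_upwards [eventually_ge_atTop 2] with n hn
    exact hlb n hn
  · intro γ hγ hγ2
    have hlogdiv : Tendsto (fun n : ℕ => Real.log (n:ℝ) / (n:ℝ)^γ) atTop (nhds 0) :=
      ((isLittleO_log_rpow_atTop hγ).tendsto_div_nhds_zero).comp tendsto_natCast_atTop_atTop
    have := hmain.mul hlogdiv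
    rw [show (4:ℝ) * 0 = 0 by ring] at this
    refine this.congr' ?_
    filter_upwards [eventually_ge_atTop 3] with n hn
    have hLpos : 0 < Real.log (n:ℝ) :=
      Real.log_pos (by exact_mod_cast (by omega : 1 < n))
    have hnp : (0:ℝ) < (n:ℝ)^γ :=
      Real.rpow_pos_of_pos (by exact_mod_cast (by omega : 0 < n)) γ
    field_simp
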